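/- arXiv:2101.12262 — 2 statements merged into one kernel-verified Lean document; each statement's English description precedes it below -/
import Mathlib

section
/- Let C be a bivariate copula admitting a tail dependence function Λ, let λ(C) = Λ(1,1) be its tail dependence coefficient, and let μ be a tail generating measure. Set a(μ) = (∫ max(u,v) dμ)/(∫ min(u,v) dμ). Then a(μ) ≥ 1 and λ(C) ≤ λ_μ(C) ≤ min(1, a(μ)·λ(C)). Consequently, the infimum of λ_μ(C) over all tail generating measures μ equals λ(C). -/
open MeasureTheory Filter Set

/-- A bivariate copula: `C : [0,1]² → [0,1]` with the grounded/marginal conditions and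
the 2-increasing property. -/
def IsCopula (C : ℝ → ℝ → ℝ) : Prop :=
  (∀ u ∈ Icc (0:ℝ) 1, ∀ v ∈ Icc (0:ℝ) 1, C u v ∈ Icc (0:ℝ) 1) ∧
  (∀ u ∈ Icc (0:ℝ) 1, C u 0 = 0 ∧ C 0 u = 0 ∧ C u 1 = u ∧ C 1 u = u) ∧
  (∀ u u' v v' : ℝ, u ∈ Icc (0:ℝ) 1 → u' ∈ Icc (0:ℝ) 1 →
    v ∈ Icc (0:ℝ) 1 → v' ∈ Icc (0:ℝ) 1 → u ≤ u' → v ≤ v' →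
    0 ≤ C u' v' - C u' v - C u v' + C u v)

/-- `Λ` is the tail dependence function of `C`:
`Λ(u,v) = lim_{p↓0} C(pu,pv)/p` for every `(u,v) ∈ [0,∞)²`. -/
def HasTDF (C Λ : ℝ → ℝ → ℝ) : Prop :=
  ∀ u v : ℝ, 0 ≤ u → 0 ≤ v →
    Tendsto (fun p : ℝ => C (p * u) (p * v) / p)
      (nhdsWithin (0:ℝ) (Ioi 0)) (nhds (Λ u v))

/-- A tail generating measure: a Borel probability measure on `[0,1]²` whose mass is not
concentrated on `{u = 0} ∪ {v = 0}`. -/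
def IsTailGenMeasure (μ : Measure (ℝ × ℝ)) : Prop :=
  IsProbabilityMeasure μ ∧
  μ ((Icc (0:ℝ) 1 ×ˢ Icc (0:ℝ) 1)ᶜ) = 0 ∧
  μ {q : ℝ × ℝ | q.1 = 0 ∨ q.2 = 0} < 1

/-- The μ-tail dependence measure: `λ_μ = (∫ Λ dμ) / (∫ min dμ)`, applied to
the tail dependence function `Λ` of the copula. -/
noncomputable def tdm (Λ : ℝ → ℝ → ℝ) (μ : Measure (ℝ × ℝ)) : ℝ :=
  (∫ q, Λ q.1 q.2 ∂μ) / (∫ q : ℝ × ℝ, min q.1 q.2 ∂μ)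

variable {C Λ : ℝ → ℝ → ℝ}

lemma copula_mono1 (hC : IsCopula C) {u u' v : ℝ} (hu : u ∈ Icc (0:ℝ) 1)
    (hu' : u' ∈ Icc (0:ℝ) 1) (hv : v ∈ Icc (0:ℝ) 1) (h : u ≤ u') : C u v ≤ C u' v := by
  have h2 := hC.2.2 u u' 0 v hu hu' ⟨le_refl 0, zero_le_one⟩ hv h hv.1
  have e1 := (hC.2.1 u' hu').1
  have e2 := (hC.2.1 u hu).1
  linarith

lemma copula_mono2 (hC : IsCopula C) {u v v' : ℝ} (hu : u ∈ Icc (0:ℝ) 1)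
    (hv : v ∈ Icc (0:ℝ) 1) (hv' : v' ∈ Icc (0:ℝ) 1) (h : v ≤ v') : C u v ≤ C u v' := by
  have h2 := hC.2.2 0 u v v' ⟨le_refl 0, zero_le_one⟩ hu hv hv' hu.1 h
  have e1 := (hC.2.1 v' hv').2.1
  have e2 := (hC.2.1 v hv).2.1
  linarith

lemma copula_lip1 (hC : IsCopula C) {u u' v : ℝ} (hu : u ∈ Icc (0:ℝ) 1)
    (hu' : u' ∈ Icc (0:ℝ) 1) (hv : v ∈ Icc (0:ℝ) 1) (h : u ≤ u') :
    C u' v - C u v ≤ u' - u := by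
  have h2 := hC.2.2 u u' v 1 hu hu' hv ⟨zero_le_one, le_refl 1⟩ h hv.2
  have e1 := (hC.2.1 u' hu').2.2.1
  have e2 := (hC.2.1 u hu).2.2.1
  linarith

lemma copula_lip2 (hC : IsCopula C) {u v v' : ℝ} (hu : u ∈ Icc (0:ℝ) 1)
    (hv : v ∈ Icc (0:ℝ) 1) (hv' : v' ∈ Icc (0:ℝ) 1) (h : v ≤ v') :
    C u v' - C u v ≤ v' - v := by
  have h2 := hC.2.2 u 1 v v' hu ⟨zero_le_one, le_refl 1⟩ hv hv' hu.2 h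
  have e1 := (hC.2.1 v' hv').2.2.2
  have e2 := (hC.2.1 v hv).2.2.2
  linarith

lemma copula_le_min (hC : IsCopula C) {u v : ℝ} (hu : u ∈ Icc (0:ℝ) 1)
    (hv : v ∈ Icc (0:ℝ) 1) : C u v ≤ min u v := by
  have h1 : C u v ≤ C u 1 := copula_mono2 hC hu hv ⟨zero_le_one, le_refl 1⟩ hv.2
  have h2 : C u v ≤ C 1 v := copula_mono1 hC hu ⟨zero_le_one, le_refl 1⟩ hv hu.2
  have e1 := (hC.2.1 u hu).2.2.1
  have e2 := (hC.2.1 v hv).2.2.2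
  exact le_min (by linarith) (by linarith)

lemma copula_abs_sub (hC : IsCopula C) {u u' v v' : ℝ} (hu : u ∈ Icc (0:ℝ) 1)
    (hu' : u' ∈ Icc (0:ℝ) 1) (hv : v ∈ Icc (0:ℝ) 1) (hv' : v' ∈ Icc (0:ℝ) 1) :
    |C u v - C u' v'| ≤ |u - u'| + |v - v'| := by
  have key1 : ∀ a a' b : ℝ, a ∈ Icc (0:ℝ) 1 → a' ∈ Icc (0:ℝ) 1 → b ∈ Icc (0:ℝ) 1 →
      |C a b - C a' b| ≤ |a - a'| := by
    intro a a' b ha ha' hb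
    rcases le_total a a' with h | h
    · have := copula_mono1 hC ha ha' hb h
      have := copula_lip1 hC ha ha' hb h
      rw [abs_sub_comm, abs_of_nonneg (by linarith), abs_sub_comm, abs_of_nonneg (by linarith)]
      linarith
    · have := copula_mono1 hC ha' ha hb h
      have := copula_lip1 hC ha' ha hb h
      rw [abs_of_nonneg (by linarith), abs_of_nonneg (by linarith)]
      linarith
  have key2 : ∀ a b b' : ℝ, a ∈ Icc (0:ℝ) 1 → b ∈ Icc (0:ℝ) 1 → b' ∈ Icc (0:ℝ) 1 →
      |C a b - C a b'| ≤ |b - b'| := by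
    intro a b b' ha hb hb'
    rcases le_total b b' with h | h
    · have := copula_mono2 hC ha hb hb' h
      have := copula_lip2 hC ha hb hb' h
      rw [abs_sub_comm, abs_of_nonneg (by linarith), abs_sub_comm, abs_of_nonneg (by linarith)]
      linarith
    · have := copula_mono2 hC ha hb' hb h
      have := copula_lip2 hC ha hb' hb h
      rw [abs_of_nonneg (by linarith), abs_of_nonneg (by linarith)]
      linarith
  calc |C u v - C u' v'| ≤ |C u v - C u' v| + |C u' v - C u' v'| := abs_sub_le _ _ _
    _ ≤ |u - u'| + |v - v'| := add_le_add (key1 u u' v hu hu' hv) (key2 u' v v' hu' hv hv')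


lemma eventually_small (M : ℝ) (hM : 0 ≤ M) :
    ∀ᶠ p in nhdsWithin (0:ℝ) (Ioi 0), 0 < p ∧ p * M ≤ 1 := by
  have hmem : Ioo (0:ℝ) (1/(M+1)) ∈ nhdsWithin (0:ℝ) (Ioi 0) :=
    Ioo_mem_nhdsGT_of_mem ⟨le_refl 0, by positivity⟩
  filter_upwards [hmem] with p hp
  refine ⟨hp.1, ?_⟩
  have h1 : p * (M+1) < 1 := by
    have := hp.2
    rw [lt_div_iff₀ (by positivity)] at this
    linarith
  nlinarith [hp.1]

lemma mem_Icc_of_small {p x M : ℝ} (hp : 0 < p) (hx : 0 ≤ x) (hxM : x ≤ M) (h : p * M ≤ 1) :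
    p * x ∈ Icc (0:ℝ) 1 := ⟨by positivity, le_trans (by nlinarith) h⟩

lemma tdf_nonneg (hC : IsCopula C) (hΛ : HasTDF C Λ) {u v : ℝ} (hu : 0 ≤ u) (hv : 0 ≤ v) :
    0 ≤ Λ u v := by
  refine ge_of_tendsto (hΛ u v hu hv) ?_
  filter_upwards [eventually_small (max u v) (le_max_of_le_left hu)] with p hp
  have h1 := mem_Icc_of_small hp.1 hu (le_max_left u v) hp.2
  have h2 := mem_Icc_of_small hp.1 hv (le_max_right u v) hp.2
  have := (hC.1 _ h1 _ h2).1
  exact div_nonneg this hp.1.le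

lemma tdf_le_min (hC : IsCopula C) (hΛ : HasTDF C Λ) {u v : ℝ} (hu : 0 ≤ u) (hv : 0 ≤ v) :
    Λ u v ≤ min u v := by
  refine le_of_tendsto (hΛ u v hu hv) ?_
  filter_upwards [eventually_small (max u v) (le_max_of_le_left hu)] with p hp
  have h1 := mem_Icc_of_small hp.1 hu (le_max_left u v) hp.2
  have h2 := mem_Icc_of_small hp.1 hv (le_max_right u v) hp.2
  have hle := copula_le_min hC h1 h2
  have hmin : min (p * u) (p * v) = p * min u v := by
    rcases le_total u v with h | h
    · rw [min_eq_left h, min_eq_left (by nlinarith [hp.1])]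
    · rw [min_eq_right h, min_eq_right (by nlinarith [hp.1])]
  rw [div_le_iff₀ hp.1]
  rw [hmin] at hle
  linarith [(mul_comm p (min u v) : p * min u v = min u v * p)]

lemma tdf_mono (hC : IsCopula C) (hΛ : HasTDF C Λ) {u u' v v' : ℝ} (hu : 0 ≤ u) (hv : 0 ≤ v)
    (h1 : u ≤ u') (h2 : v ≤ v') : Λ u v ≤ Λ u' v' := by
  have hu' : 0 ≤ u' := hu.trans h1
  have hv' : 0 ≤ v' := hv.trans h2
  refine le_of_tendsto_of_tendsto (hΛ u v hu hv) (hΛ u' v' hu' hv') ?_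
  filter_upwards [eventually_small (max u' v') (le_max_of_le_left hu')] with p hp
  have m1 := mem_Icc_of_small hp.1 hu (h1.trans (le_max_left u' v')) hp.2
  have m1' := mem_Icc_of_small hp.1 hu' (le_max_left u' v') hp.2
  have m2 := mem_Icc_of_small hp.1 hv (h2.trans (le_max_right u' v')) hp.2
  have m2' := mem_Icc_of_small hp.1 hv' (le_max_right u' v') hp.2
  have s1 : C (p*u) (p*v) ≤ C (p*u') (p*v) :=
    copula_mono1 hC m1 m1' m2 (by nlinarith [hp.1])
  have s2 : C (p*u') (p*v) ≤ C (p*u') (p*v') :=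
    copula_mono2 hC m1' m2 m2' (by nlinarith [hp.1])
  have : C (p*u) (p*v) ≤ C (p*u') (p*v') := s1.trans s2
  exact (div_le_div_iff_of_pos_right hp.1).mpr this

lemma tdf_diag (hC : IsCopula C) (hΛ : HasTDF C Λ) {t : ℝ} (ht : 0 ≤ t) :
    Λ t t = t * Λ 1 1 := by
  rcases eq_or_lt_of_le ht with h | h
  · subst h
    rw [zero_mul]
    have h0 : Tendsto (fun p : ℝ => C (p * 0) (p * 0) / p)
        (nhdsWithin (0:ℝ) (Ioi 0)) (nhds 0) := by
      have heq : (fun p : ℝ => C (p * 0) (p * 0) / p) =ᶠ[nhdsWithin (0:ℝ) (Ioi 0)]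
          (fun _ => 0) := by
        filter_upwards [self_mem_nhdsWithin] with p _
        rw [mul_zero]
        have := (hC.2.1 0 ⟨le_refl 0, zero_le_one⟩).1
        simp [this]
      exact Tendsto.congr' heq.symm tendsto_const_nhds
    exact tendsto_nhds_unique (hΛ 0 0 le_rfl le_rfl) h0
  · -- t > 0
    have hmap : Tendsto (fun p : ℝ => p * t) (nhdsWithin (0:ℝ) (Ioi 0))
        (nhdsWithin (0:ℝ) (Ioi 0)) := by
      rw [tendsto_nhdsWithin_iff]
      constructor
      · have : Tendsto (fun p : ℝ => p * t) (nhds 0) (nhds (0 * t)) :=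
          (continuous_id.mul continuous_const).tendsto 0
        rw [zero_mul] at this
        exact this.mono_left nhdsWithin_le_nhds
      · filter_upwards [self_mem_nhdsWithin] with p hp
        exact mul_pos hp h
    have h1 : Tendsto (fun p : ℝ => C ((p*t) * 1) ((p*t) * 1) / (p*t))
        (nhdsWithin (0:ℝ) (Ioi 0)) (nhds (Λ 1 1)) :=
      (hΛ 1 1 zero_le_one zero_le_one).comp hmap
    have h2 : Tendsto (fun p : ℝ => t * (C ((p*t) * 1) ((p*t) * 1) / (p*t)))
        (nhdsWithin (0:ℝ) (Ioi 0)) (nhds (t * Λ 1 1)) := h1.const_mul t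
    have heq : (fun p : ℝ => t * (C ((p*t) * 1) ((p*t) * 1) / (p*t)))
        =ᶠ[nhdsWithin (0:ℝ) (Ioi 0)] (fun p : ℝ => C (p * t) (p * t) / p) := by
      filter_upwards [self_mem_nhdsWithin] with p hp
      rw [mul_one]
      have ht0 : t ≠ 0 := ne_of_gt h
      have hp0 : p ≠ 0 := ne_of_gt hp
      field_simp
    exact tendsto_nhds_unique (hΛ t t ht ht) (h2.congr' heq)

lemma tdf_abs_sub (hC : IsCopula C) (hΛ : HasTDF C Λ) {u u' v v' : ℝ}
    (hu : 0 ≤ u) (hu' : 0 ≤ u') (hv : 0 ≤ v) (hv' : 0 ≤ v') :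
    |Λ u v - Λ u' v'| ≤ |u - u'| + |v - v'| := by
  have ht : Tendsto (fun p : ℝ => |C (p*u) (p*v) / p - C (p*u') (p*v') / p|)
      (nhdsWithin (0:ℝ) (Ioi 0)) (nhds |Λ u v - Λ u' v'|) :=
    ((hΛ u v hu hv).sub (hΛ u' v' hu' hv')).abs
  refine le_of_tendsto ht ?_
  have hM : 0 ≤ max (max u u') (max v v') := le_trans hu (le_max_of_le_left (le_max_left _ _))
  filter_upwards [eventually_small _ hM] with p hp
  have m1 := mem_Icc_of_small hp.1 hu (le_max_of_le_left (le_max_left u u')) hp.2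
  have m1' := mem_Icc_of_small hp.1 hu' (le_max_of_le_left (le_max_right u u')) hp.2
  have m2 := mem_Icc_of_small hp.1 hv (le_max_of_le_right (le_max_left v v')) hp.2
  have m2' := mem_Icc_of_small hp.1 hv' (le_max_of_le_right (le_max_right v v')) hp.2
  have key := copula_abs_sub hC m1 m1' m2 m2'
  have e1 : |p*u - p*u'| = p * |u - u'| := by rw [← mul_sub, abs_mul, abs_of_pos hp.1]
  have e2 : |p*v - p*v'| = p * |v - v'| := by rw [← mul_sub, abs_mul, abs_of_pos hp.1]
  rw [e1, e2] at key
  rw [div_sub_div_same, abs_div, abs_of_pos hp.1, div_le_iff₀ hp.1]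
  linarith

noncomputable def clamp (x : ℝ) : ℝ := max (min x 1) 0

lemma clamp_mem (x : ℝ) : clamp x ∈ Icc (0:ℝ) 1 :=
  ⟨le_max_right _ _, max_le (min_le_right x 1) zero_le_one⟩

lemma clamp_eq {x : ℝ} (hx : x ∈ Icc (0:ℝ) 1) : clamp x = x := by
  unfold clamp
  rw [min_eq_left hx.2, max_eq_left hx.1]

lemma clamp_lip (x y : ℝ) : |clamp x - clamp y| ≤ |x - y| := by
  unfold clamp
  calc |max (min x 1) 0 - max (min y 1) 0| ≤ |min x 1 - min y 1| :=
        abs_max_sub_max_le_abs _ _ _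
    _ ≤ |x - y| := by
        have h := abs_max_sub_max_le_abs (-x) (-y) (-1)
        rw [max_neg_neg, max_neg_neg] at h
        calc |min x 1 - min y 1| = |-min x 1 - -min y 1| := by rw [abs_sub_comm]; ring_nf
          _ ≤ |-x - -y| := h
          _ = |x - y| := by rw [abs_sub_comm]; ring_nf

lemma tdf_clamp_continuous (hC : IsCopula C) (hΛ : HasTDF C Λ) :
    Continuous (fun q : ℝ × ℝ => Λ (clamp q.1) (clamp q.2)) := by
  rw [Metric.continuous_iff]
  intro q ε hε
  refine ⟨ε / 3, by positivity, fun q' hq' => ?_⟩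
  have h1 : |clamp q'.1 - clamp q.1| ≤ |q'.1 - q.1| := clamp_lip _ _
  have h2 : |clamp q'.2 - clamp q.2| ≤ |q'.2 - q.2| := clamp_lip _ _
  have hd1 : |q'.1 - q.1| ≤ dist q' q := by
    rw [Prod.dist_eq]; exact le_trans (le_of_eq (Real.dist_eq _ _).symm) (le_max_left _ _)
  have hd2 : |q'.2 - q.2| ≤ dist q' q := by
    rw [Prod.dist_eq]; exact le_trans (le_of_eq (Real.dist_eq _ _).symm) (le_max_right _ _)
  have key := tdf_abs_sub hC hΛ (clamp_mem q'.1).1 (clamp_mem q.1).1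
    (clamp_mem q'.2).1 (clamp_mem q.2).1
  rw [Real.dist_eq]
  calc |Λ (clamp q'.1) (clamp q'.2) - Λ (clamp q.1) (clamp q.2)|
      ≤ |clamp q'.1 - clamp q.1| + |clamp q'.2 - clamp q.2| := key
    _ ≤ dist q' q + dist q' q := add_le_add (h1.trans hd1) (h2.trans hd2)
    _ < ε/3 + ε/3 := by linarith
    _ < ε := by linarith

lemma tdm_master (hC : IsCopula C) (hΛ : HasTDF C Λ)
    (μ : Measure (ℝ × ℝ)) (hμ : IsTailGenMeasure μ) :
    0 < (∫ q : ℝ × ℝ, min q.1 q.2 ∂μ) ∧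
    (∫ q : ℝ × ℝ, min q.1 q.2 ∂μ) ≤ (∫ q : ℝ × ℝ, max q.1 q.2 ∂μ) ∧
    Λ 1 1 ≤ tdm Λ μ ∧ tdm Λ μ ≤ 1 ∧
    tdm Λ μ ≤ ((∫ q : ℝ × ℝ, max q.1 q.2 ∂μ) / (∫ q : ℝ × ℝ, min q.1 q.2 ∂μ)) * Λ 1 1 := by
  haveI hprob : IsProbabilityMeasure μ := hμ.1
  have hsq : ∀ᵐ q ∂μ, q ∈ (Icc (0:ℝ) 1 ×ˢ Icc (0:ℝ) 1) := mem_ae_iff.mpr hμ.2.1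
  have cmin : Continuous (fun q : ℝ × ℝ => min q.1 q.2) := continuous_fst.min continuous_snd
  have cmax : Continuous (fun q : ℝ × ℝ => max q.1 q.2) := continuous_fst.max continuous_snd
  have int_min : Integrable (fun q : ℝ × ℝ => min q.1 q.2) μ := by
    refine Integrable.mono' (integrable_const 1) cmin.aestronglyMeasurable ?_
    filter_upwards [hsq] with q hq
    rcases hq with ⟨h1, h2⟩
    rw [Real.norm_eq_abs, abs_le]
    constructor
    · have := le_min h1.1 h2.1; linarith
    · exact le_trans (min_le_left _ _) h1.2
  have int_max : Integrable (fun q : ℝ × ℝ => max q.1 q.2) μ := by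
    refine Integrable.mono' (integrable_const 1) cmax.aestronglyMeasurable ?_
    filter_upwards [hsq] with q hq
    rcases hq with ⟨h1, h2⟩
    rw [Real.norm_eq_abs, abs_le]
    exact ⟨by have := le_max_left q.1 q.2; linarith [h1.1], max_le h1.2 h2.2⟩
  -- Λ integrability
  have hgf : (fun q : ℝ × ℝ => Λ (clamp q.1) (clamp q.2)) =ᵐ[μ] (fun q => Λ q.1 q.2) := by
    filter_upwards [hsq] with q hq
    rw [clamp_eq hq.1, clamp_eq hq.2]
  have meas_f : AEStronglyMeasurable (fun q : ℝ × ℝ => Λ q.1 q.2) μ :=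
    ((tdf_clamp_continuous hC hΛ).aestronglyMeasurable).congr hgf
  have int_f : Integrable (fun q : ℝ × ℝ => Λ q.1 q.2) μ := by
    refine Integrable.mono' (integrable_const 1) meas_f ?_
    filter_upwards [hsq] with q hq
    rcases hq with ⟨h1, h2⟩
    rw [Real.norm_eq_abs, abs_le]
    constructor
    · have := tdf_nonneg hC hΛ h1.1 h2.1; linarith
    · exact (tdf_le_min hC hΛ h1.1 h2.1).trans (le_trans (min_le_left _ _) h1.2)
  -- positivity of ∫ min
  have hmin_nonneg_ae : 0 ≤ᵐ[μ] (fun q : ℝ × ℝ => min q.1 q.2) := by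
    filter_upwards [hsq] with q hq
    exact le_min hq.1.1 hq.2.1
  have hm_nonneg : 0 ≤ ∫ q : ℝ × ℝ, min q.1 q.2 ∂μ := integral_nonneg_of_ae hmin_nonneg_ae
  have hm_pos : 0 < ∫ q : ℝ × ℝ, min q.1 q.2 ∂μ := by
    rcases hm_nonneg.lt_or_eq with h | h
    · exact h
    · exfalso
      have hz : (fun q : ℝ × ℝ => min q.1 q.2) =ᵐ[μ] 0 :=
        (integral_eq_zero_iff_of_nonneg_ae hmin_nonneg_ae int_min).mp h.symm
      have haxes : ∀ᵐ q ∂μ, q ∈ {q : ℝ × ℝ | q.1 = 0 ∨ q.2 = 0} := by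
        filter_upwards [hsq, hz] with q hq hq0
        have hq0' : min q.1 q.2 = 0 := hq0
        rcases le_total q.1 q.2 with hle | hle
        · left
          rw [min_eq_left hle] at hq0'
          exact hq0'
        · right
          rw [min_eq_right hle] at hq0'
          exact hq0'
      have hmeas : MeasurableSet {q : ℝ × ℝ | q.1 = 0 ∨ q.2 = 0} := by
        have : {q : ℝ × ℝ | q.1 = 0 ∨ q.2 = 0} =
            {q : ℝ × ℝ | q.1 = 0} ∪ {q : ℝ × ℝ | q.2 = 0} := rfl
        rw [this]
        exact ((isClosed_eq continuous_fst continuous_const).measurableSet).union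
          ((isClosed_eq continuous_snd continuous_const).measurableSet)
      have h1 : μ {q : ℝ × ℝ | q.1 = 0 ∨ q.2 = 0} = 1 := by
        rw [← prob_compl_eq_zero_iff hmeas]
        rw [ae_iff] at haxes
        convert haxes using 2
        rfl
      exact absurd h1 (ne_of_lt hμ.2.2)
  -- min ≤ max
  have hmm : (∫ q : ℝ × ℝ, min q.1 q.2 ∂μ) ≤ ∫ q : ℝ × ℝ, max q.1 q.2 ∂μ :=
    integral_mono int_min int_max (fun q => min_le_max)
  -- λ bounds
  have hlam0 : 0 ≤ Λ 1 1 := tdf_nonneg hC hΛ zero_le_one zero_le_one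
  -- Ineq A : λ * ∫min ≤ ∫Λ
  have hA : Λ 1 1 * (∫ q : ℝ × ℝ, min q.1 q.2 ∂μ) ≤ ∫ q : ℝ × ℝ, Λ q.1 q.2 ∂μ := by
    rw [← integral_const_mul]
    refine integral_mono_ae (int_min.const_mul _) int_f ?_
    filter_upwards [hsq] with q hq
    have ht : 0 ≤ min q.1 q.2 := le_min hq.1.1 hq.2.1
    have := tdf_mono hC hΛ ht ht (min_le_left q.1 q.2) (min_le_right q.1 q.2)
    have hd := tdf_diag hC hΛ ht
    calc Λ 1 1 * min q.1 q.2 = min q.1 q.2 * Λ 1 1 := mul_comm _ _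
      _ = Λ (min q.1 q.2) (min q.1 q.2) := hd.symm
      _ ≤ Λ q.1 q.2 := this
  -- Ineq B : ∫Λ ≤ ∫min
  have hB : (∫ q : ℝ × ℝ, Λ q.1 q.2 ∂μ) ≤ ∫ q : ℝ × ℝ, min q.1 q.2 ∂μ := by
    refine integral_mono_ae int_f int_min ?_
    filter_upwards [hsq] with q hq
    exact tdf_le_min hC hΛ hq.1.1 hq.2.1
  -- Ineq C : ∫Λ ≤ λ * ∫max
  have hCineq : (∫ q : ℝ × ℝ, Λ q.1 q.2 ∂μ) ≤ Λ 1 1 * ∫ q : ℝ × ℝ, max q.1 q.2 ∂μ := by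
    rw [← integral_const_mul]
    refine integral_mono_ae int_f (int_max.const_mul _) ?_
    filter_upwards [hsq] with q hq
    have hM : 0 ≤ max q.1 q.2 := le_trans hq.1.1 (le_max_left _ _)
    have h1 := tdf_mono hC hΛ hq.1.1 hq.2.1 (le_max_left q.1 q.2) (le_max_right q.1 q.2)
    have hd := tdf_diag hC hΛ hM
    calc Λ q.1 q.2 ≤ Λ (max q.1 q.2) (max q.1 q.2) := h1
      _ = max q.1 q.2 * Λ 1 1 := hd
      _ = Λ 1 1 * max q.1 q.2 := mul_comm _ _
  refine ⟨hm_pos, hmm, ?_, ?_, ?_⟩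
  · exact (le_div_iff₀ hm_pos).mpr hA
  · exact (div_le_one hm_pos).mpr hB
  · unfold tdm
    have heq : ((∫ q : ℝ × ℝ, max q.1 q.2 ∂μ) / (∫ q : ℝ × ℝ, min q.1 q.2 ∂μ)) * Λ 1 1
        = (Λ 1 1 * ∫ q : ℝ × ℝ, max q.1 q.2 ∂μ) / (∫ q : ℝ × ℝ, min q.1 q.2 ∂μ) := by
      ring
    rw [heq]
    exact div_le_div_of_nonneg_right hCineq hm_pos.le

lemma dirac_tgm : IsTailGenMeasure (Measure.dirac ((1:ℝ), (1:ℝ))) := by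
  refine ⟨by infer_instance, ?_, ?_⟩
  · rw [Measure.dirac_apply' _ ((measurableSet_Icc.prod measurableSet_Icc).compl)]
    have : ((1:ℝ), (1:ℝ)) ∈ Icc (0:ℝ) 1 ×ˢ Icc (0:ℝ) 1 :=
      ⟨⟨zero_le_one, le_refl 1⟩, ⟨zero_le_one, le_refl 1⟩⟩
    simp [indicator_of_notMem, this]
  · have hmeas : MeasurableSet {q : ℝ × ℝ | q.1 = 0 ∨ q.2 = 0} := by
      have : {q : ℝ × ℝ | q.1 = 0 ∨ q.2 = 0} =
          {q : ℝ × ℝ | q.1 = 0} ∪ {q : ℝ × ℝ | q.2 = 0} := rfl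
      rw [this]
      exact ((isClosed_eq continuous_fst continuous_const).measurableSet).union
        ((isClosed_eq continuous_snd continuous_const).measurableSet)
    rw [Measure.dirac_apply' _ hmeas]
    have : ((1:ℝ), (1:ℝ)) ∉ {q : ℝ × ℝ | q.1 = 0 ∨ q.2 = 0} := by
      simp
    rw [indicator_of_notMem this]
    norm_num

lemma tdm_dirac (Λ : ℝ → ℝ → ℝ) : tdm Λ (Measure.dirac ((1:ℝ), (1:ℝ))) = Λ 1 1 := by
  unfold tdm
  rw [integral_dirac (fun q : ℝ × ℝ => Λ q.1 q.2) ((1:ℝ), (1:ℝ)),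
    integral_dirac (fun q : ℝ × ℝ => min q.1 q.2) ((1:ℝ), (1:ℝ))]
  simp

theorem tdm_tdc_inequalities (C Λ : ℝ → ℝ → ℝ)
    (hC : IsCopula C) (hΛ : HasTDF C Λ)
    (μ : Measure (ℝ × ℝ)) (hμ : IsTailGenMeasure μ) :
    (1 ≤ (∫ q : ℝ × ℝ, max q.1 q.2 ∂μ) / (∫ q : ℝ × ℝ, min q.1 q.2 ∂μ)) ∧
    (Λ 1 1 ≤ tdm Λ μ ∧
      tdm Λ μ ≤ min 1 (((∫ q : ℝ × ℝ, max q.1 q.2 ∂μ) / (∫ q : ℝ × ℝ, min q.1 q.2 ∂μ)) * Λ 1 1)) ∧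
    sInf {x : ℝ | ∃ ν : Measure (ℝ × ℝ), IsTailGenMeasure ν ∧ x = tdm Λ ν} = Λ 1 1 := by
  obtain ⟨hm_pos, hmm, h1, h2, h3⟩ := tdm_master hC hΛ μ hμ
  have hmem : Λ 1 1 ∈ {x : ℝ | ∃ ν : Measure (ℝ × ℝ), IsTailGenMeasure ν ∧ x = tdm Λ ν} :=
    ⟨Measure.dirac ((1:ℝ), (1:ℝ)), dirac_tgm, (tdm_dirac Λ).symm⟩
  have hlb : ∀ x ∈ {x : ℝ | ∃ ν : Measure (ℝ × ℝ), IsTailGenMeasure ν ∧ x = tdm Λ ν},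
      Λ 1 1 ≤ x := by
    rintro x ⟨ν, hν, rfl⟩
    exact (tdm_master hC hΛ ν hν).2.2.1
  refine ⟨(one_le_div hm_pos).mpr hmm, ⟨h1, le_min h2 h3⟩, ?_⟩
  exact le_antisymm (csInf_le ⟨Λ 1 1, hlb⟩ hmem) (le_csInf ⟨_, hmem⟩ hlb)
end

section
/- Let C and C' be bivariate copulas admitting tail dependence functions Λ(·;C) and Λ(·;C'), and define the marginal functions Λ₁(u;C) = Λ(u,1;C) and Λ₂(v;C) = Λ(1,v;C) for u,v ∈ [0,1]. Then: (1) for all (u,v) ∈ [0,∞)², Λ(u,v;C) = v·Λ₁(u/v;C) if 0 < u ≤ v, and Λ(u,v;C) = u·Λ₂(v/u;C) if 0 < v < u; and (2) the inequalities Λ₁(u;C) ≤ Λ₁(u;C') and Λ₂(v;C) ≤ Λ₂(v;C') for all u,v ∈ [0,1] hold if and only if Λ(u,v;C) ≤ Λ(u,v;C') for all (u,v) ∈ [0,∞)². -/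
open MeasureTheory Filter Set

private lemma tdf_homog {C Λ : ℝ → ℝ → ℝ} (hΛ : HasTDF C Λ)
    {c u v : ℝ} (hc : 0 < c) (hu : 0 ≤ u) (hv : 0 ≤ v) :
    Λ (c * u) (c * v) = c * Λ u v := by
  have h1 := hΛ (c * u) (c * v) (by positivity) (by positivity)
  have hmap : Tendsto (fun p : ℝ => p * c) (nhdsWithin 0 (Ioi 0)) (nhdsWithin 0 (Ioi 0)) := by
    apply tendsto_nhdsWithin_of_tendsto_nhds_of_eventually_within
    · have h : Tendsto (fun p : ℝ => p * c) (nhds (0:ℝ)) (nhds ((0:ℝ) * c)) :=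
        tendsto_id.mul_const c
      rw [zero_mul] at h
      exact h.mono_left nhdsWithin_le_nhds
    · filter_upwards [self_mem_nhdsWithin] with p hp
      exact mul_pos hp hc
  have h2 := (((hΛ u v hu hv).comp hmap).const_mul c)
  have h3 : Tendsto (fun p : ℝ => C (p * (c * u)) (p * (c * v)) / p)
      (nhdsWithin (0:ℝ) (Ioi 0)) (nhds (c * Λ u v)) := by
    refine h2.congr' ?_
    filter_upwards [self_mem_nhdsWithin] with p hp
    simp only [Function.comp]
    have hp' : p ≠ 0 := (mem_Ioi.mp hp).ne'
    rw [mul_assoc, mul_assoc]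
    field_simp [hp', hc.ne']
  exact tendsto_nhds_unique h1 h3

private lemma tdf_zero_zero {C Λ : ℝ → ℝ → ℝ} (hC : IsCopula C) (hΛ : HasTDF C Λ) :
    Λ 0 0 = 0 := by
  have h1 := hΛ 0 0 le_rfl le_rfl
  have hC00 : C 0 0 = 0 := (hC.2.1 0 (by constructor <;> norm_num)).1
  have h2 : Tendsto (fun p : ℝ => C (p * 0) (p * 0) / p)
      (nhdsWithin (0:ℝ) (Ioi 0)) (nhds 0) := by
    simp only [mul_zero, hC00, zero_div]
    exact tendsto_const_nhds
  exact tendsto_nhds_unique h1 h2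

theorem tdf_marginal_decomposition_and_order (C C' Λ Λ' : ℝ → ℝ → ℝ)
    (hC : IsCopula C) (hC' : IsCopula C')
    (hΛ : HasTDF C Λ) (hΛ' : HasTDF C' Λ') :
    (∀ u v : ℝ, (0 < u → u ≤ v → Λ u v = v * Λ (u / v) 1) ∧
                (0 < v → v < u → Λ u v = u * Λ 1 (v / u))) ∧
    (((∀ u ∈ Icc (0:ℝ) 1, Λ u 1 ≤ Λ' u 1) ∧ (∀ v ∈ Icc (0:ℝ) 1, Λ 1 v ≤ Λ' 1 v)) ↔
      (∀ u v : ℝ, 0 ≤ u → 0 ≤ v → Λ u v ≤ Λ' u v)) := by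
  have dec1 : ∀ u v : ℝ, 0 ≤ u → 0 < v → Λ u v = v * Λ (u / v) 1 := by
    intro u v hu hv
    have := tdf_homog hΛ hv (div_nonneg hu hv.le) (zero_le_one)
    rw [mul_div_cancel₀ _ hv.ne', mul_one] at this
    exact this
  have dec2 : ∀ u v : ℝ, 0 < u → 0 ≤ v → Λ u v = u * Λ 1 (v / u) := by
    intro u v hu hv
    have := tdf_homog hΛ hu (zero_le_one) (div_nonneg hv hu.le)
    rw [mul_div_cancel₀ _ hu.ne', mul_one] at this
    exact this
  have dec1' : ∀ u v : ℝ, 0 ≤ u → 0 < v → Λ' u v = v * Λ' (u / v) 1 := by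
    intro u v hu hv
    have := tdf_homog hΛ' hv (div_nonneg hu hv.le) (zero_le_one)
    rw [mul_div_cancel₀ _ hv.ne', mul_one] at this
    exact this
  have dec2' : ∀ u v : ℝ, 0 < u → 0 ≤ v → Λ' u v = u * Λ' 1 (v / u) := by
    intro u v hu hv
    have := tdf_homog hΛ' hu (zero_le_one) (div_nonneg hv hu.le)
    rw [mul_div_cancel₀ _ hu.ne', mul_one] at this
    exact this
  constructor
  · intro u v
    exact ⟨fun hu huv => dec1 u v hu.le (hu.trans_le huv),
           fun hv hvu => dec2 u v (hv.trans hvu) hv.le⟩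
  · constructor
    · rintro ⟨h1, h2⟩ u v hu hv
      rcases lt_or_ge 0 v with hv0 | hv0
      · rcases le_or_gt u v with huv | huv
        · rw [dec1 u v hu hv0, dec1' u v hu hv0]
          have hmem : u / v ∈ Icc (0:ℝ) 1 :=
            ⟨div_nonneg hu hv0.le, (div_le_one hv0).2 huv⟩
          exact mul_le_mul_of_nonneg_left (h1 _ hmem) hv0.le
        · have hu0 : 0 < u := hv0.trans huv
          rw [dec2 u v hu0 hv, dec2' u v hu0 hv]
          have hmem : v / u ∈ Icc (0:ℝ) 1 :=
            ⟨div_nonneg hv hu0.le, (div_le_one hu0).2 huv.le⟩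
          exact mul_le_mul_of_nonneg_left (h2 _ hmem) hu0.le
      · have hv0 : v = 0 := le_antisymm hv0 hv
        subst hv0
        rcases lt_or_ge 0 u with hu0 | hu0
        · rw [dec2 u 0 hu0 le_rfl, dec2' u 0 hu0 le_rfl]
          have hmem : (0:ℝ) / u ∈ Icc (0:ℝ) 1 := by
            simp
          exact mul_le_mul_of_nonneg_left (h2 _ hmem) hu0.le
        · have hu0 : u = 0 := le_antisymm hu0 hu
          subst hu0
          rw [tdf_zero_zero hC hΛ, tdf_zero_zero hC' hΛ']
    · intro h
      exact ⟨fun u hu => h u 1 hu.1 zero_le_one, fun v hv => h 1 v zero_le_one hv.1⟩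
end
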